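/- Let r > 0, let n be a positive integer with n ≥ r/ln 2, let t ≥ 0 and set t_n := ⌊nt⌋/n. Let x : ℝ → ℝ^d be a function with ‖x_t‖_r < ∞, and define the frozen segment x̂_t : (−∞,0] → ℝ^d by x̂_t(θ) := x((t+θ) ∧ t_n). Then ‖x̂_t‖_r ≤ ‖x_t‖_r + |x(t_n)| ≤ 3‖x_t‖_r. -/

import Mathlib

/-- The segment `x_t(θ) = x(t + θ)`. -/
def seg {d : ℕ} (x : ℝ → EuclideanSpace ℝ (Fin d)) (t : ℝ) :
    ℝ → EuclideanSpace ℝ (Fin d) := fun θ => x (t + θ)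

/-- The weighted norm `‖φ‖_r = sup_{θ ≤ 0} e^{rθ} |φ(θ)|` (as a real supremum). -/
noncomputable def rnorm {d : ℕ} (r : ℝ) (φ : ℝ → EuclideanSpace ℝ (Fin d)) : ℝ :=
  sSup ((fun θ => Real.exp (r * θ) * ‖φ θ‖) '' Set.Iic 0)

/-- The Euler–Maruyama discretization point `t_n = ⌊nt⌋/n`. -/
noncomputable def tdisc (n : ℕ) (t : ℝ) : ℝ := (⌊(n : ℝ) * t⌋ : ℝ) / n

/-- The frozen (Euler–Maruyama) segment `x̂_t(θ) = x((t + θ) ∧ t_n)`. -/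
noncomputable def frozenSeg {d : ℕ} (x : ℝ → EuclideanSpace ℝ (Fin d)) (n : ℕ) (t : ℝ) :
    ℝ → EuclideanSpace ℝ (Fin d) := fun θ => x (min (t + θ) (tdisc n t))

/-- for `n ≥ r / ln 2`, `t ≥ 0`, `t_n := ⌊nt⌋/n` and `‖x_t‖_r < ∞`, the frozen
segment `x̂_t(θ) := x((t+θ) ∧ t_n)` satisfies `‖x̂_t‖_r ≤ ‖x_t‖_r + |x(t_n)| ≤ 3 ‖x_t‖_r`. -/
theorem frozen_segment_bound {d : ℕ} (r : ℝ) (hr : 0 < r) (n : ℕ) (hn : 0 < n)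
    (hnr : r / Real.log 2 ≤ (n : ℝ)) (t : ℝ) (ht : 0 ≤ t)
    (x : ℝ → EuclideanSpace ℝ (Fin d))
    (hfin : BddAbove ((fun θ => Real.exp (r * θ) * ‖seg x t θ‖) '' Set.Iic 0)) :
    rnorm r (frozenSeg x n t) ≤ rnorm r (seg x t) + ‖x (tdisc n t)‖ ∧
    rnorm r (seg x t) + ‖x (tdisc n t)‖ ≤ 3 * rnorm r (seg x t) := by

  have hn0 : (0:ℝ) < n := by exact_mod_cast hn
  set tn := tdisc n t with htn
  have htn_le : tn ≤ t := by
    rw [htn, tdisc, div_le_iff₀ hn0]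
    have := Int.floor_le ((n:ℝ) * t)
    linarith [mul_comm t (n:ℝ)]
  have hgap : t - tn ≤ 1 / n := by
    rw [htn, tdisc, sub_div' (ne_of_gt hn0), div_le_div_iff₀ hn0 hn0]
    have := Int.lt_floor_add_one ((n:ℝ) * t)
    nlinarith
  have h0mem : Real.exp (r*0) * ‖seg x t 0‖ ∈
      ((fun θ => Real.exp (r * θ) * ‖seg x t θ‖) '' Set.Iic 0) := ⟨0, Set.mem_Iic.mpr le_rfl, rfl⟩
  have hrnn : 0 ≤ rnorm r (seg x t) :=
    le_trans (by positivity) (le_csSup hfin h0mem)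
  have hθ0 : tn - t ≤ 0 := by linarith
  have h1 : Real.exp (r*(tn-t)) * ‖x tn‖ ≤ rnorm r (seg x t) := by
    have hmem : Real.exp (r*(tn-t)) * ‖seg x t (tn-t)‖ ∈
        ((fun θ => Real.exp (r * θ) * ‖seg x t θ‖) '' Set.Iic 0) := ⟨tn - t, Set.mem_Iic.mpr hθ0, rfl⟩
    have hseg : seg x t (tn - t) = x tn := by simp [seg]
    have := le_csSup hfin hmem
    rwa [hseg] at this
  have hlog2 : 0 < Real.log 2 := Real.log_pos (by norm_num)
  have hexp : Real.exp (r*(t-tn)) ≤ 2 := by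
    rw [show (2:ℝ) = Real.exp (Real.log 2) from (Real.exp_log (by norm_num)).symm]
    apply Real.exp_le_exp.mpr
    have hrn : r ≤ (n:ℝ) * Real.log 2 := by
      rw [div_le_iff₀ hlog2] at hnr; linarith
    have h1n : r * (t - tn) ≤ r * (1/n) :=
      mul_le_mul_of_nonneg_left hgap hr.le
    have : r * (1/n) ≤ Real.log 2 := by
      rw [mul_one_div, div_le_iff₀ hn0]; nlinarith
    linarith
  have h2 : ‖x tn‖ ≤ 2 * rnorm r (seg x t) := by
    have e1 : Real.exp (r*(t-tn)) * (Real.exp (r*(tn-t)) * ‖x tn‖) = ‖x tn‖ := by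
      rw [← mul_assoc, ← Real.exp_add]; ring_nf; rw [Real.exp_zero, one_mul]
    calc ‖x tn‖ = Real.exp (r*(t-tn)) * (Real.exp (r*(tn-t)) * ‖x tn‖) := e1.symm
      _ ≤ Real.exp (r*(t-tn)) * rnorm r (seg x t) :=
          mul_le_mul_of_nonneg_left h1 (Real.exp_pos _).le
      _ ≤ 2 * rnorm r (seg x t) := mul_le_mul_of_nonneg_right hexp hrnn
  have hfirst : rnorm r (frozenSeg x n t) ≤ rnorm r (seg x t) + ‖x tn‖ := by
    apply Real.sSup_le
    · rintro v ⟨θ, hθ, rfl⟩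
      simp only [frozenSeg, ← htn]
      rcases le_or_gt (t+θ) tn with h | h
      · rw [min_eq_left h]
        have hle : Real.exp (r*θ) * ‖seg x t θ‖ ≤ rnorm r (seg x t) :=
          le_csSup hfin ⟨θ, hθ, rfl⟩
        have : seg x t θ = x (t+θ) := rfl
        rw [this] at hle
        linarith [norm_nonneg (x tn)]
      · rw [min_eq_right h.le]
        have hθle : θ ≤ 0 := hθ
        have hex : Real.exp (r*θ) ≤ 1 := Real.exp_le_one_iff.mpr (by nlinarith)
        have : Real.exp (r*θ) * ‖x tn‖ ≤ 1 * ‖x tn‖ :=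
          mul_le_mul_of_nonneg_right hex (norm_nonneg _)
        linarith
    · linarith [norm_nonneg (x tn)]
  exact ⟨hfirst, by linarith⟩
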